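/- For every real a > 0, the double integral ∫_0^∞ ∫_0^∞ log((z + y + a)/(y + a)) · e^{−z−y} dz dy equals 1 − a·e^{a}·E₁(a). -/

import Mathlib

open MeasureTheory Real

open Set Filter Topology

/-- The exponential integral `E₁(x) = ∫ₓ^∞ e^{-t}/t dt`. -/
noncomputable def E1 (x : ℝ) : ℝ := ∫ t in Set.Ioi x, Real.exp (-t) / t

-- shift lemma
lemma shiftIoi (f : ℝ → ℝ) (b : ℝ) :
    (∫ z in Ioi (0:ℝ), f (z + b)) = ∫ u in Ioi b, f u := by
  have hemb : MeasurableEmbedding (fun z : ℝ => z + b) :=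
    (MeasurableEquiv.addRight b).measurableEmbedding
  have := hemb.setIntegral_map (μ := volume) f (Ioi b)
  rw [map_add_right_eq_self volume b] at this
  rw [this]
  congr 1
  ext x; simp [lt_add_iff_pos_left]

lemma g_int {b : ℝ} (hb : 0 < b) :
    IntegrableOn (fun t => Real.exp (-t) / t) (Ioi b) := by
  have hm : AEStronglyMeasurable (fun t => Real.exp (-t) / t) (volume.restrict (Ioi b)) := by
    refine ContinuousOn.aestronglyMeasurable ?_ measurableSet_Ioi
    exact (Real.continuous_exp.comp continuous_neg).continuousOn.div continuousOn_id
      (fun t ht => ne_of_gt (hb.trans ht))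
  have hexp : IntegrableOn (fun t : ℝ => b⁻¹ * Real.exp (-t)) (Ioi b) := by
    have := exp_neg_integrableOn_Ioi b (zero_lt_one (α := ℝ))
    simp only [neg_one_mul] at this
    exact this.const_mul _
  refine Integrable.mono' hexp hm ?_
  filter_upwards [ae_restrict_mem measurableSet_Ioi] with t ht
  have h1 : 0 < t := hb.trans ht
  rw [Real.norm_eq_abs, abs_of_nonneg (div_nonneg (exp_pos _).le h1.le)]
  rw [div_eq_inv_mul]
  gcongr
  exact ht.le

lemma E1_nonneg {x : ℝ} (hx : 0 < x) : 0 ≤ E1 x :=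
  setIntegral_nonneg measurableSet_Ioi fun t ht =>
    div_nonneg (exp_pos _).le (hx.trans ht).le

lemma E1_le {x : ℝ} (hx : 0 < x) : E1 x ≤ Real.exp (-x) / x := by
  have h1 : IntegrableOn (fun t : ℝ => Real.exp (-t) / x) (Ioi x) := by
    have := exp_neg_integrableOn_Ioi x (zero_lt_one (α := ℝ))
    simp only [neg_one_mul] at this
    exact this.div_const _
  have h2 : E1 x ≤ ∫ t in Ioi x, Real.exp (-t) / x := by
    refine setIntegral_mono_on (g_int hx) h1 measurableSet_Ioi fun t ht => ?_
    gcongr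
    exact ht.le
  calc E1 x ≤ ∫ t in Ioi x, Real.exp (-t) / x := h2
    _ = (∫ t in Ioi x, Real.exp (-t)) / x := by rw [integral_div]
    _ = Real.exp (-x) / x := by rw [integral_exp_neg_Ioi]

lemma F_eq {b : ℝ} (hb : 0 < b) :
    (∫ z in Ioi (0:ℝ), Real.exp (-z) / (z + b)) = Real.exp b * E1 b := by
  have : ∀ z ∈ Ioi (0:ℝ), Real.exp (-z) / (z + b)
      = Real.exp b * (Real.exp (-(z + b)) / (z + b)) := by
    intro z hz
    rw [← mul_div_assoc, ← Real.exp_add]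
    ring_nf
  rw [setIntegral_congr_fun measurableSet_Ioi this, integral_const_mul,
    shiftIoi (fun u => Real.exp (-u) / u) b]
  rfl

lemma E1_eventually {c : ℝ} (hc : 0 < c) :
    ∀ y ∈ Ioi c, E1 y = E1 c - ∫ t in c..y, Real.exp (-t) / t := by
  intro y hy
  have hy' : c ≤ y := le_of_lt hy
  have hsplit : E1 c = (∫ t in Ioc c y, Real.exp (-t) / t) + E1 y := by
    unfold E1
    rw [← setIntegral_union (Ioc_disjoint_Ioi le_rfl) measurableSet_Ioi
      ((g_int hc).mono_set Ioc_subset_Ioi_self)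
      ((g_int hc).mono_set (Ioi_subset_Ioi hy')), Ioc_union_Ioi_eq_Ioi hy']
  rw [intervalIntegral.integral_of_le hy']
  linarith [hsplit]

lemma E1_hasDerivAt {x : ℝ} (hx : 0 < x) :
    HasDerivAt E1 (-(Real.exp (-x) / x)) x := by
  set c := x / 2 with hc
  have hc0 : 0 < c := by positivity
  have hcx : c < x := by simp [hc]; linarith
  have hint : IntervalIntegrable (fun t => Real.exp (-t) / t) volume c x :=
    (intervalIntegrable_iff_integrableOn_Ioc_of_le hcx.le).2
      (((g_int hc0).mono_set Ioc_subset_Ioi_self))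
  have hF : HasDerivAt (fun y => ∫ t in c..y, Real.exp (-t) / t)
      (Real.exp (-x) / x) x := by
    refine intervalIntegral.integral_hasDerivAt_right hint ?_ ?_
    · refine ContinuousOn.stronglyMeasurableAtFilter (s := Ioi c) isOpen_Ioi ?_ x hcx
      exact (Real.continuous_exp.comp continuous_neg).continuousOn.div
        continuousOn_id (fun t ht => ne_of_gt (hc0.trans ht))
    · exact ContinuousAt.div ((Real.continuous_exp.comp continuous_neg).continuousAt)
        continuousAt_id (ne_of_gt hx)
  have := (hF.const_sub (E1 c)).congr_of_eventuallyEq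
    (Filter.eventuallyEq_of_mem (Ioi_mem_nhds hcx) (E1_eventually hc0))
  simpa using this

lemma x_exp_int : IntegrableOn (fun x : ℝ => x * Real.exp (-x)) (Ioi 0) := by
  have := Real.GammaIntegral_convergent (s := 2) (by norm_num)
  refine this.congr_fun (fun x hx => ?_) measurableSet_Ioi
  rw [show (2:ℝ) - 1 = 1 by norm_num]; simp only [Real.rpow_one]; rw [mul_comm]

lemma log_le_div {b z : ℝ} (hb : 0 < b) (hz : 0 ≤ z) :
    Real.log ((z + b) / b) ≤ z / b := by
  have h1 : 0 < (z + b) / b := by positivity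
  have := Real.log_le_sub_one_of_pos h1
  have h2 : (z + b) / b - 1 = z / b := by field_simp; ring
  linarith

lemma log_nonneg' {b z : ℝ} (hb : 0 < b) (hz : 0 ≤ z) :
    0 ≤ Real.log ((z + b) / b) := by
  apply Real.log_nonneg
  rw [le_div_iff₀ hb]
  linarith

lemma inner_int {b : ℝ} (hb : 0 < b) :
    IntegrableOn (fun z => Real.log ((z + b) / b) * Real.exp (-z)) (Ioi 0) := by
  have hm : AEStronglyMeasurable (fun z => Real.log ((z + b) / b) * Real.exp (-z))
      (volume.restrict (Ioi 0)) := by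
    refine ContinuousOn.aestronglyMeasurable ?_ measurableSet_Ioi
    refine ContinuousOn.mul (ContinuousOn.log ?_ ?_) ?_
    · exact (continuousOn_id.add continuousOn_const).div_const _
    · intro z hz
      have : (0:ℝ) < z := hz
      positivity
    · exact (Real.continuous_exp.comp continuous_neg).continuousOn
  refine Integrable.mono' (x_exp_int.const_mul b⁻¹) hm ?_
  filter_upwards [ae_restrict_mem measurableSet_Ioi] with z hz
  have hz0 : (0:ℝ) < z := hz
  rw [Real.norm_eq_abs, abs_of_nonneg (mul_nonneg (log_nonneg' hb hz0.le) (exp_pos _).le)]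
  calc Real.log ((z + b) / b) * Real.exp (-z) ≤ (z / b) * Real.exp (-z) := by
        gcongr; exact log_le_div hb hz0.le
    _ = b⁻¹ * (z * Real.exp (-z)) := by ring

lemma inner_eq {b : ℝ} (hb : 0 < b) :
    (∫ z in Ioi (0:ℝ), Real.log ((z + b) / b) * Real.exp (-z)) = Real.exp b * E1 b := by
  have hu : ∀ z ∈ Ioi (0:ℝ), HasDerivAt (fun z => Real.log ((z + b) / b)) ((z + b)⁻¹) z := by
    intro z hz
    have hz0 : (0:ℝ) < z := hz
    have h1 : HasDerivAt (fun z : ℝ => Real.log (z + b)) ((z + b)⁻¹) z := by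
      have := ((hasDerivAt_id z).add_const b).log (by positivity)
      simpa using this
    have h2 := h1.sub_const (Real.log b)
    refine h2.congr_of_eventuallyEq ?_
    filter_upwards [eventually_gt_nhds (show (-b) < z by linarith)] with y hy
    rw [Real.log_div (by linarith) hb.ne']
  have hv : ∀ z ∈ Ioi (0:ℝ), HasDerivAt (fun z : ℝ => -Real.exp (-z)) (Real.exp (-z)) z := by
    intro z _
    have := ((hasDerivAt_neg z).exp).neg
    simp only [mul_neg, mul_one, neg_neg] at this; exact this
  have huv' : IntegrableOn ((fun z => Real.log ((z + b) / b)) * fun z => Real.exp (-z))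
      (Ioi (0:ℝ)) := inner_int hb
  have hu'v : IntegrableOn ((fun z => (z + b)⁻¹) * fun z : ℝ => -Real.exp (-z)) (Ioi (0:ℝ)) := by
    have hm : AEStronglyMeasurable ((fun z => (z + b)⁻¹) * fun z : ℝ => -Real.exp (-z))
        (volume.restrict (Ioi 0)) := by
      refine ContinuousOn.aestronglyMeasurable ?_ measurableSet_Ioi
      refine ContinuousOn.mul (ContinuousOn.inv₀ (continuousOn_id.add continuousOn_const) ?_)
        ((Real.continuous_exp.comp continuous_neg).continuousOn.neg)
      intro z hz
      have : (0:ℝ) < z := hz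
      positivity
    have hexp : IntegrableOn (fun z : ℝ => b⁻¹ * Real.exp (-z)) (Ioi 0) := by
      have := exp_neg_integrableOn_Ioi (0:ℝ) (zero_lt_one (α := ℝ))
      simp only [neg_one_mul] at this
      exact this.const_mul _
    refine Integrable.mono' hexp hm ?_
    filter_upwards [ae_restrict_mem measurableSet_Ioi] with z hz
    have hz0 : (0:ℝ) < z := hz
    simp only [Pi.mul_apply, norm_mul, Real.norm_eq_abs, abs_neg,
      abs_of_nonneg (exp_pos (-z)).le, abs_of_nonneg (by positivity : (0:ℝ) ≤ (z + b)⁻¹)]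
    gcongr
    linarith
  have h_zero : Tendsto ((fun z => Real.log ((z + b) / b)) * fun z : ℝ => -Real.exp (-z))
      (𝓝[>] (0:ℝ)) (𝓝 0) := by
    have hc : ContinuousAt ((fun z => Real.log ((z + b) / b)) * fun z : ℝ => -Real.exp (-z)) 0 := by
      refine ContinuousAt.mul (ContinuousAt.log ?_ (by positivity)) ?_
      · exact (continuousAt_id.add continuousAt_const).div continuousAt_const hb.ne'
      · exact ((Real.continuous_exp.comp continuous_neg).continuousAt).neg
    have := hc.continuousWithinAt (s := Ioi (0:ℝ))
    simpa [ContinuousWithinAt, Real.log_div hb.ne' hb.ne'] using this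
  have h_infty : Tendsto ((fun z => Real.log ((z + b) / b)) * fun z : ℝ => -Real.exp (-z))
      atTop (𝓝 0) := by
    have hbound : Tendsto (fun z : ℝ => b⁻¹ * (z * Real.exp (-z))) atTop (𝓝 0) := by
      have := Real.tendsto_pow_mul_exp_neg_atTop_nhds_zero 1
      simp only [pow_one] at this
      simpa using this.const_mul b⁻¹
    have hneg : Tendsto (fun z : ℝ => -(b⁻¹ * (z * Real.exp (-z)))) atTop (𝓝 0) := by
      simpa using hbound.neg
    refine tendsto_of_tendsto_of_tendsto_of_le_of_le' hneg tendsto_const_nhds ?_ ?_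
    · filter_upwards [eventually_gt_atTop (0:ℝ)] with z hz
      simp only [Pi.mul_apply, mul_neg, neg_le_neg_iff]
      calc Real.log ((z + b) / b) * Real.exp (-z) ≤ (z / b) * Real.exp (-z) := by
            gcongr; exact log_le_div hb hz.le
        _ = b⁻¹ * (z * Real.exp (-z)) := by ring
    · filter_upwards [eventually_gt_atTop (0:ℝ)] with z hz
      simp only [Pi.mul_apply, mul_neg, neg_nonpos]
      exact mul_nonneg (log_nonneg' hb hz.le) (exp_pos _).le
  have key := integral_Ioi_mul_deriv_eq_deriv_mul hu hv huv' hu'v h_zero h_infty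
  rw [key]
  have : (∫ z in Ioi (0:ℝ), (z + b)⁻¹ * -Real.exp (-z))
      = -(Real.exp b * E1 b) := by
    rw [← F_eq hb, ← integral_neg]
    refine setIntegral_congr_fun measurableSet_Ioi fun z _ => ?_
    field_simp
  rw [this]
  ring

lemma E1_contOn {a : ℝ} (ha : 0 < a) : ContinuousOn E1 (Ioi a) :=
  fun x hx => ((E1_hasDerivAt (ha.trans hx)).continuousAt).continuousWithinAt

lemma E1_intOn {a : ℝ} (ha : 0 < a) : IntegrableOn E1 (Ioi a) := by
  have hm : AEStronglyMeasurable E1 (volume.restrict (Ioi a)) :=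
    (E1_contOn ha).aestronglyMeasurable measurableSet_Ioi
  have hexp : IntegrableOn (fun x : ℝ => a⁻¹ * Real.exp (-x)) (Ioi a) := by
    have := exp_neg_integrableOn_Ioi a (zero_lt_one (α := ℝ))
    simp only [neg_one_mul] at this
    exact this.const_mul _
  refine Integrable.mono' hexp hm ?_
  filter_upwards [ae_restrict_mem measurableSet_Ioi] with x hx
  have hx0 : 0 < x := ha.trans hx
  rw [Real.norm_eq_abs, abs_of_nonneg (E1_nonneg hx0)]
  calc E1 x ≤ Real.exp (-x) / x := E1_le hx0
    _ ≤ a⁻¹ * Real.exp (-x) := by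
        rw [div_eq_inv_mul]
        exact mul_le_mul_of_nonneg_right (inv_anti₀ ha hx.le) (exp_pos _).le

lemma E1_integral {a : ℝ} (ha : 0 < a) :
    (∫ u in Ioi a, E1 u) = Real.exp (-a) - a * E1 a := by
  have hu : ∀ x ∈ Ioi a, HasDerivAt E1 (-(Real.exp (-x) / x)) x :=
    fun x hx => E1_hasDerivAt (ha.trans hx)
  have hv : ∀ x ∈ Ioi a, HasDerivAt (fun x : ℝ => x) 1 x := fun x _ => hasDerivAt_id x
  have huv' : IntegrableOn (E1 * fun _ : ℝ => (1:ℝ)) (Ioi a) := by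
    simpa [Pi.mul_def] using E1_intOn ha
  have hu'v : IntegrableOn ((fun x => -(Real.exp (-x) / x)) * fun x : ℝ => x) (Ioi a) := by
    have : IntegrableOn (fun x : ℝ => -Real.exp (-x)) (Ioi a) := by
      have := exp_neg_integrableOn_Ioi a (zero_lt_one (α := ℝ))
      simp only [neg_one_mul] at this
      exact this.neg
    refine this.congr_fun (fun x hx => ?_) measurableSet_Ioi
    have hx0 : (0:ℝ) < x := ha.trans hx
    simp only [Pi.mul_apply]; rw [neg_mul, div_mul_cancel₀ _ hx0.ne']
  have h_zero : Tendsto (E1 * fun x : ℝ => x) (𝓝[>] a) (𝓝 (E1 a * a)) := by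
    have : ContinuousAt (E1 * fun x : ℝ => x) a :=
      ((E1_hasDerivAt ha).continuousAt).mul continuousAt_id
    exact this.continuousWithinAt
  have h_infty : Tendsto (E1 * fun x : ℝ => x) atTop (𝓝 0) := by
    have hbound : Tendsto (fun x : ℝ => Real.exp (-x)) atTop (𝓝 0) := by
      exact Real.tendsto_exp_neg_atTop_nhds_zero
    refine tendsto_of_tendsto_of_tendsto_of_le_of_le' tendsto_const_nhds hbound ?_ ?_
    · filter_upwards [eventually_gt_atTop (0:ℝ)] with x hx
      exact mul_nonneg (E1_nonneg hx) hx.le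
    · filter_upwards [eventually_gt_atTop (0:ℝ)] with x hx
      calc E1 x * x ≤ (Real.exp (-x) / x) * x := by gcongr; exact (E1_le hx)
        _ = Real.exp (-x) := by field_simp
  have key := integral_Ioi_mul_deriv_eq_deriv_mul hu hv huv' hu'v h_zero h_infty
  simp only [mul_one] at key
  rw [key]
  have : (∫ x in Ioi a, -(Real.exp (-x) / x) * x) = -Real.exp (-a) := by
    rw [← integral_exp_neg_Ioi a, ← integral_neg]
    refine setIntegral_congr_fun measurableSet_Ioi fun x hx => ?_
    have hx0 : (0:ℝ) < x := ha.trans hx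
    field_simp
  rw [this]
  ring

theorem stmt5 (a : ℝ) (ha : 0 < a) :
    (∫ y in Set.Ioi (0 : ℝ), ∫ z in Set.Ioi (0 : ℝ),
        Real.log ((z + y + a) / (y + a)) * Real.exp (-z - y)) =
      1 - a * Real.exp a * E1 a := by
  have hinner : ∀ y ∈ Ioi (0:ℝ),
      (∫ z in Set.Ioi (0 : ℝ), Real.log ((z + y + a) / (y + a)) * Real.exp (-z - y))
        = Real.exp a * E1 (y + a) := by
    intro y hy
    have hy0 : (0:ℝ) < y := hy
    have hb : 0 < y + a := by linarith
    have step1 : ∀ z, Real.log ((z + y + a) / (y + a)) * Real.exp (-z - y)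
        = (Real.log ((z + (y + a)) / (y + a)) * Real.exp (-z)) * Real.exp (-y) := by
      intro z
      rw [mul_assoc, ← Real.exp_add, show -z + -y = -z - y by ring, add_assoc]
    calc (∫ z in Set.Ioi (0 : ℝ), Real.log ((z + y + a) / (y + a)) * Real.exp (-z - y))
        = ∫ z in Set.Ioi (0 : ℝ),
            (Real.log ((z + (y + a)) / (y + a)) * Real.exp (-z)) * Real.exp (-y) := by
          simp only [step1]
      _ = (∫ z in Set.Ioi (0 : ℝ),
            Real.log ((z + (y + a)) / (y + a)) * Real.exp (-z)) * Real.exp (-y) := by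
          rw [integral_mul_const]
      _ = (Real.exp (y + a) * E1 (y + a)) * Real.exp (-y) := by rw [inner_eq hb]
      _ = Real.exp a * E1 (y + a) := by
          rw [mul_comm (Real.exp (y + a)) (E1 (y + a)), mul_assoc, ← Real.exp_add]
          ring_nf
  rw [setIntegral_congr_fun measurableSet_Ioi hinner, integral_const_mul]
  have : (∫ y in Ioi (0:ℝ), E1 (y + a)) = ∫ u in Ioi a, E1 u := by
    rw [shiftIoi E1 a]
  rw [this, E1_integral ha, mul_sub, ← Real.exp_add]
  simp
  ring
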